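/- arXiv:2001.03015 — 6 statements merged into one kernel-verified Lean document; each statement's English description precedes it below -/
import Mathlib

section
/- For every integer k ≥ 1 there exists a sequence of 2^k - 1 acyclic edge additions such that, no matter how an online algorithm irrevocably orients each edge upon arrival, some vertex attains in-degree at least k. More precisely, there is an adversarial strategy using 2^k - 1 edges forcing maximum in-degree k against any irrevocable online orientation algorithm. -/
/-- An online orientation algorithm: given the history (a list of previously arrived
edges together with the orientation chosen for each; `true` means "oriented toward
the second endpoint") and a newly arriving edge, it irrevocably chooses an
orientation for the new edge. -/
abbrev OnlineOrientAlg : Type := List ((ℕ × ℕ) × Bool) → ℕ × ℕ → Bool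

/-- The history (list of edges with their chosen orientations) after the first `t`
edges of the sequence `e` have been processed by algorithm `A`. -/
def runHist (A : OnlineOrientAlg) (e : ℕ → ℕ × ℕ) : ℕ → List ((ℕ × ℕ) × Bool)
  | 0 => []
  | t + 1 => runHist A e t ++ [((e t), A (runHist A e t) (e t))]

/-- The head (the vertex towards which the edge points) of the `i`-th edge. -/
def runHead (A : OnlineOrientAlg) (e : ℕ → ℕ × ℕ) (i : ℕ) : ℕ :=
  if A (runHist A e i) (e i) then (e i).2 else (e i).1

/-- In-degree of `v` after the first `t` edges are oriented by `A` on sequence `e`. -/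
def runIndeg (A : OnlineOrientAlg) (e : ℕ → ℕ × ℕ) (t v : ℕ) : ℕ :=
  ((Finset.range t).filter (fun i => runHead A e i = v)).card

namespace AdvForce

/-- `j` is an ancestor of `x` in the heap-index tree (repeated halving). -/
def under (x j : ℕ) : Prop := ∃ m, m < x + 1 ∧ x / 2 ^ m = j

instance (x j : ℕ) : Decidable (under x j) := by unfold under; infer_instance

lemma under_intro {x j : ℕ} (m : ℕ) (h : x / 2 ^ m = j) : under x j := by
  rcases lt_or_ge m (x + 1) with hm | hm
  · exact ⟨m, hm, h⟩
  · have hx : x < 2 ^ m :=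
      lt_of_lt_of_le (Nat.lt_two_pow_self (n := x)) (Nat.pow_le_pow_right (by norm_num) (by omega))
    have hj : j = 0 := by rw [← h, Nat.div_eq_of_lt hx]
    subst hj
    exact ⟨x, by omega, Nat.div_eq_of_lt (Nat.lt_two_pow_self (n := x))⟩

lemma under_elim {x j : ℕ} (h : under x j) : ∃ m, x / 2 ^ m = j := by
  obtain ⟨m, _, h⟩ := h; exact ⟨m, h⟩

lemma under_refl (x : ℕ) : under x x := under_intro 0 (by simp)

lemma under_le {x j : ℕ} (h : under x j) : j ≤ x := by
  obtain ⟨m, h⟩ := under_elim h; exact h ▸ Nat.div_le_self x _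

lemma under_trans {x j i : ℕ} (h1 : under x j) (h2 : under j i) : under x i := by
  obtain ⟨a, ha⟩ := under_elim h1; obtain ⟨b, hb⟩ := under_elim h2
  refine under_intro (a + b) ?_
  rw [pow_add, ← Nat.div_div_eq_div_mul, ha, hb]

lemma under_child_left (j : ℕ) : under (2 * j) j :=
  under_intro 1 (by rw [pow_one]; omega)

lemma under_child_right (j : ℕ) : under (2 * j + 1) j :=
  under_intro 1 (by rw [pow_one]; omega)

lemma under_total {x j j' : ℕ} (h1 : under x j) (h2 : under x j') :
    under j j' ∨ under j' j := by
  obtain ⟨a, ha⟩ := under_elim h1; obtain ⟨b, hb⟩ := under_elim h2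
  rcases le_total a b with hab | hab
  · left
    refine under_intro (b - a) ?_
    rw [← ha, Nat.div_div_eq_div_mul, ← pow_add, Nat.add_sub_cancel' hab, hb]
  · right
    refine under_intro (a - b) ?_
    rw [← hb, Nat.div_div_eq_div_mul, ← pow_add, Nat.add_sub_cancel' hab, ha]

lemma under_children_disjoint {j x : ℕ} (hj : 1 ≤ j) (h1 : under x (2 * j))
    (h2 : under x (2 * j + 1)) : False := by
  rcases under_total h1 h2 with h | h
  · obtain ⟨m, hm⟩ := under_elim h
    rcases Nat.eq_zero_or_pos m with rfl | hm1
    · rw [pow_zero, Nat.div_one] at hm; omega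
    · have h2m : 2 ≤ 2 ^ m := by
        calc 2 = 2 ^ 1 := (pow_one 2).symm
        _ ≤ 2 ^ m := Nat.pow_le_pow_right (by norm_num) hm1
      have := Nat.div_le_div_left (a := 2 * j) h2m (by norm_num : 0 < 2)
      omega
  · obtain ⟨m, hm⟩ := under_elim h
    rcases Nat.eq_zero_or_pos m with rfl | hm1
    · rw [pow_zero, Nat.div_one] at hm; omega
    · have h2m : 2 ≤ 2 ^ m := by
        calc 2 = 2 ^ 1 := (pow_one 2).symm
        _ ≤ 2 ^ m := Nat.pow_le_pow_right (by norm_num) hm1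
      have := Nat.div_le_div_left (a := 2 * j + 1) h2m (by norm_num : 0 < 2)
      omega

lemma under_of_ne {x j : ℕ} (h : under x j) (hne : x ≠ j) :
    under x (2 * j) ∨ under x (2 * j + 1) := by
  obtain ⟨m, hm⟩ := under_elim h
  rcases Nat.eq_zero_or_pos m with rfl | hm1
  · rw [pow_zero, Nat.div_one] at hm; exact absurd hm hne
  · have hd : x / 2 ^ (m - 1) / 2 = j := by
      rw [Nat.div_div_eq_div_mul, ← pow_succ, show m - 1 + 1 = m from by omega, hm]
    have : x / 2 ^ (m - 1) = 2 * j ∨ x / 2 ^ (m - 1) = 2 * j + 1 := by omega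
    rcases this with h' | h'
    · exact Or.inl (under_intro (m - 1) h')
    · exact Or.inr (under_intro (m - 1) h')

end AdvForce

namespace AdvForce

/-- Champion of heap node `j` as read off from a history list. -/
def champOf (n : ℕ) (h : List ((ℕ × ℕ) × Bool)) (j : ℕ) : ℕ :=
  if n ≤ j then j - n
  else
    match h[n - 1 - j]? with
    | some (p, bb) => if bb then p.2 else p.1
    | none => 0

/-- The `t`-th edge presented by the adversary, given history `h`. -/
def edgeAt (n : ℕ) (h : List ((ℕ × ℕ) × Bool)) (t : ℕ) : ℕ × ℕ :=
  (champOf n h (2 * (n - 1 - t)), champOf n h (2 * (n - 1 - t) + 1))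

/-- The adversary's history after `t` steps. -/
def hist (A : OnlineOrientAlg) (n : ℕ) : ℕ → List ((ℕ × ℕ) × Bool)
  | 0 => []
  | t + 1 =>
      hist A n t ++
        [(edgeAt n (hist A n t) t, A (hist A n t) (edgeAt n (hist A n t) t))]

/-- The adversary's edge sequence. -/
def eSeq (A : OnlineOrientAlg) (n : ℕ) (i : ℕ) : ℕ × ℕ := edgeAt n (hist A n i) i

/-- The champion of heap node `j`. -/
def champ (A : OnlineOrientAlg) (n : ℕ) (j : ℕ) : ℕ := champOf n (hist A n n) j

variable (A : OnlineOrientAlg) (n : ℕ)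

lemma hist_length (t : ℕ) : (hist A n t).length = t := by
  induction t with
  | zero => rfl
  | succ t ih => simp [hist, ih]

lemma hist_getElem_stable {i t t' : ℕ} (hi : i < t) (ht : t ≤ t') :
    (hist A n t')[i]? = (hist A n t)[i]? := by
  induction t', ht using Nat.le_induction with
  | base => rfl
  | succ t' ht ih =>
      rw [show hist A n (t' + 1) = hist A n t' ++
        [(edgeAt n (hist A n t') t', A (hist A n t') (edgeAt n (hist A n t') t'))] from rfl]
      rw [List.getElem?_append_left (by rw [hist_length]; omega)]
      exact ih

lemma champOf_hist (t j : ℕ) (h : n ≤ j ∨ n - 1 - j < t) :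
    champOf n (hist A n t) j = champ A n j := by
  by_cases hnj : n ≤ j
  · simp [champOf, champ, if_pos hnj]
  · have hj : j < n := by omega
    have ht : n - 1 - j < t := by omega
    have hget : (hist A n t)[n - 1 - j]? = (hist A n n)[n - 1 - j]? := by
      rcases le_total t n with h' | h'
      · exact (hist_getElem_stable A n ht h').symm
      · exact hist_getElem_stable A n (by omega) h'
    simp only [champOf, if_neg hnj, hget, champ]

lemma runHist_eq : ∀ t, runHist A (eSeq A n) t = hist A n t
  | 0 => rfl
  | t + 1 => by
      rw [runHist, runHist_eq t]
      rfl

lemma runHead_eq (i : ℕ) (hi : i < n - 1) :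
    runHead A (eSeq A n) i = champ A n (n - 1 - i) := by
  have hj1 : n - 1 - (n - 1 - i) = i := by omega
  rw [← champOf_hist A n (i + 1) (n - 1 - i) (Or.inr (by omega))]
  have hlt : ¬ n ≤ n - 1 - i := by omega
  have hget : (hist A n (i + 1))[i]? =
      some (eSeq A n i, A (hist A n i) (eSeq A n i)) := by
    have hl : (hist A n i).length = i := hist_length A n i
    rw [show hist A n (i + 1) = hist A n i ++
      [(edgeAt n (hist A n i) i, A (hist A n i) (edgeAt n (hist A n i) i))] from rfl]
    rw [List.getElem?_append_right (le_of_eq hl), hl]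
    simp only [Nat.sub_self, List.getElem?_cons_zero]
    rfl
  simp only [champOf, if_neg hlt, hj1, hget]
  simp only [runHead, runHist_eq]

lemma eSeq_eq (j : ℕ) (hj1 : 1 ≤ j) (hj2 : j ≤ n - 1) :
    eSeq A n (n - 1 - j) = (champ A n (2 * j), champ A n (2 * j + 1)) := by
  have hn : 2 ≤ n := by omega
  show edgeAt n (hist A n (n - 1 - j)) (n - 1 - j) = _
  have h1 : n - 1 - (n - 1 - j) = j := by omega
  simp only [edgeAt, h1]
  rw [champOf_hist A n (n - 1 - j) (2 * j) (by omega),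
      champOf_hist A n (n - 1 - j) (2 * j + 1) (by omega)]

lemma champ_children (j : ℕ) (hj1 : 1 ≤ j) (hj2 : j < n) :
    champ A n j = champ A n (2 * j) ∨ champ A n j = champ A n (2 * j + 1) := by
  have h := runHead_eq A n (n - 1 - j) (by omega)
  rw [show n - 1 - (n - 1 - j) = j from by omega] at h
  rw [← h]
  unfold runHead
  rw [eSeq_eq A n j hj1 (by omega)]
  split
  · right; rfl
  · left; rfl

end AdvForce
namespace AdvForce

theorem champ_under (A : OnlineOrientAlg) (n : ℕ) (j : ℕ) (hj1 : 1 ≤ j) (hj2 : j < 2 * n) :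
    champ A n j < n ∧ under (champ A n j + n) j := by
  by_cases hn : n ≤ j
  · have hc : champ A n j = j - n := by simp [champ, champOf, if_pos hn]
    rw [hc]
    refine ⟨by omega, ?_⟩
    rw [show j - n + n = j from by omega]
    exact under_refl j
  · push_neg at hn
    rcases champ_children A n j hj1 hn with h | h
    · have ih := champ_under A n (2 * j) (by omega) (by omega)
      rw [h]
      exact ⟨ih.1, under_trans ih.2 (under_child_left j)⟩
    · have ih := champ_under A n (2 * j + 1) (by omega) (by omega)
      rw [h]
      exact ⟨ih.1, under_trans ih.2 (under_child_right j)⟩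
termination_by 2 * n - j
decreasing_by all_goals omega

lemma champ_leaf (A : OnlineOrientAlg) (n v : ℕ) : champ A n (v + n) = v := by
  simp [champ, champOf]

theorem champ_path (A : OnlineOrientAlg) (n : ℕ) (j j' : ℕ) (hj1 : 1 ≤ j) (hj2 : j < 2 * n)
    (hj1' : 1 ≤ j') (hu : under (champ A n j + n) j') (hj' : under j' j) :
    champ A n j' = champ A n j := by
  by_cases hjj : j' = j
  · rw [hjj]
  by_cases hn : n ≤ j
  · exfalso
    have hc : champ A n j = j - n := by simp [champ, champOf, if_pos hn]
    have hcj : champ A n j + n = j := by omega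
    rw [hcj] at hu
    exact hjj (le_antisymm (under_le hu) (under_le hj'))
  · push_neg at hn
    have hcases := champ_children A n j hj1 hn
    rcases under_of_ne hj' hjj with h2 | h2
    · rcases hcases with hcc | hcc
      · -- j' under 2j, champ j = champ 2j : recurse
        have := champ_path A n (2 * j) j' (by omega) (by omega) hj1' (by rw [← hcc]; exact hu) h2
        rw [this, hcc]
      · -- j' under 2j, champ j = champ (2j+1) : contradiction
        exfalso
        have hcu := champ_under A n (2 * j + 1) (by omega) (by omega)
        have hx1 : under (champ A n j + n) (2 * j) := under_trans hu h2
        have hx2 : under (champ A n j + n) (2 * j + 1) := by rw [hcc]; exact hcu.2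
        exact under_children_disjoint hj1 hx1 hx2
    · rcases hcases with hcc | hcc
      · exfalso
        have hcu := champ_under A n (2 * j) (by omega) (by omega)
        have hx1 : under (champ A n j + n) (2 * j + 1) := under_trans hu h2
        have hx2 : under (champ A n j + n) (2 * j) := by rw [hcc]; exact hcu.2
        exact under_children_disjoint hj1 hx2 hx1
      · have := champ_path A n (2 * j + 1) j' (by omega) (by omega) hj1'
          (by rw [← hcc]; exact hu) h2
        rw [this, hcc]
termination_by 2 * n - j
decreasing_by all_goals omega

lemma champ_children_ne (A : OnlineOrientAlg) (n : ℕ) (j : ℕ) (hj1 : 1 ≤ j) (hj2 : j < n) :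
    champ A n (2 * j) ≠ champ A n (2 * j + 1) := by
  intro h
  have h1 := champ_under A n (2 * j) (by omega) (by omega)
  have h2 := champ_under A n (2 * j + 1) (by omega) (by omega)
  exact under_children_disjoint hj1 h1.2 (h ▸ h2.2)

theorem loser_bound (A : OnlineOrientAlg) (n : ℕ) (j c j'' : ℕ) (hj1 : 1 ≤ j) (hjn : j < n)
    (hc : c = 2 * j ∨ c = 2 * j + 1) (hlose : champ A n c ≠ champ A n j)
    (hj1'' : 1 ≤ j'') (hj2'' : j'' < 2 * n) (hch : champ A n j'' = champ A n c) :
    c ≤ j'' := by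
  have hcu := champ_under A n c (by omega) (by omega)
  have hju := champ_under A n j'' hj1'' hj2''
  rw [hch] at hju
  have hcj2 : c / 2 = j := by omega
  rcases under_total hju.2 hcu.2 with h | h
  · exact under_le h
  · by_cases hcj : j'' = c
    · omega
    · exfalso
      obtain ⟨m, hm⟩ := under_elim h
      have hm0 : m ≠ 0 := by
        rintro rfl; rw [pow_zero, Nat.div_one] at hm; exact hcj hm.symm
      have hjj : under j j'' := by
        refine under_intro (m - 1) ?_
        rw [← hcj2, Nat.div_div_eq_div_mul,
          show 2 * 2 ^ (m - 1) = 2 ^ m from by rw [← pow_succ']; congr 1; omega]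
        exact hm
      have hpath := champ_path A n j'' j hj1'' hj2'' hj1
        (by rw [hch]; exact under_trans hcu.2 (under_intro 1 (by rw [pow_one]; exact hcj2))) hjj
      exact hlose (hch.symm.trans hpath.symm)

/-- The smallest heap node whose champion is `v`. -/
noncomputable def minNode (A : OnlineOrientAlg) (n v : ℕ) : ℕ :=
  sInf {j | 1 ≤ j ∧ j < 2 * n ∧ champ A n j = v}

lemma minNode_spec (A : OnlineOrientAlg) (n v : ℕ) (hv : v < n) :
    1 ≤ minNode A n v ∧ minNode A n v < 2 * n ∧ champ A n (minNode A n v) = v := by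
  have hne : {j | 1 ≤ j ∧ j < 2 * n ∧ champ A n j = v}.Nonempty :=
    ⟨v + n, by omega, by omega, champ_leaf A n v⟩
  exact Nat.sInf_mem hne

lemma minNode_le (A : OnlineOrientAlg) (n v j : ℕ) (h1 : 1 ≤ j) (h2 : j < 2 * n)
    (h3 : champ A n j = v) : minNode A n v ≤ j :=
  Nat.sInf_le ⟨h1, h2, h3⟩

end AdvForce
namespace AdvForce

theorem edge_split (A : OnlineOrientAlg) (n : ℕ) (i u w : ℕ) (hi : i < n - 1)
    (hs : s(u, w) = s((eSeq A n i).1, (eSeq A n i).2)) :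
    (minNode A n u ≤ n - 1 - i ∧ 2 * (n - 1 - i) ≤ minNode A n w ∧
      minNode A n w ≤ 2 * (n - 1 - i) + 1) ∨
    (minNode A n w ≤ n - 1 - i ∧ 2 * (n - 1 - i) ≤ minNode A n u ∧
      minNode A n u ≤ 2 * (n - 1 - i) + 1) := by
  have hn : 2 ≤ n := by omega
  have hj1 : 1 ≤ n - 1 - i := by omega
  have hj2 : n - 1 - i ≤ n - 1 := by omega
  rw [show i = n - 1 - (n - 1 - i) from by omega] at hs
  rw [eSeq_eq A n (n - 1 - i) hj1 hj2] at hs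
  set j := n - 1 - i with hjdef
  dsimp only at hs
  have hne := champ_children_ne A n j hj1 (by omega)
  have hcases := champ_children A n j hj1 (by omega)
  rw [Sym2.eq_iff] at hs
  have hloser : ∀ cbar, (cbar = 2 * j ∨ cbar = 2 * j + 1) →
      champ A n cbar ≠ champ A n j →
      2 * j ≤ minNode A n (champ A n cbar) ∧ minNode A n (champ A n cbar) ≤ 2 * j + 1 := by
    intro cbar hcb hlose
    have hcbu := champ_under A n cbar (by omega) (by omega)
    have hms := minNode_spec A n (champ A n cbar) hcbu.1
    have hub : minNode A n (champ A n cbar) ≤ cbar :=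
      minNode_le A n _ cbar (by omega) (by omega) rfl
    have hlb : cbar ≤ minNode A n (champ A n cbar) :=
      loser_bound A n j cbar _ hj1 (by omega) hcb hlose hms.1 hms.2.1 hms.2.2
    omega
  rcases hcases with hw | hw
  · have hlose : champ A n (2 * j + 1) ≠ champ A n j := fun h => hne (hw.symm.trans h.symm)
    rcases hs with ⟨hu1, hw1⟩ | ⟨hu1, hw1⟩
    · subst hu1; subst hw1
      refine Or.inl ⟨minNode_le A n _ j hj1 (by omega) hw, ?_, ?_⟩
      · exact (hloser (2 * j + 1) (Or.inr rfl) hlose).1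
      · exact (hloser (2 * j + 1) (Or.inr rfl) hlose).2
    · subst hu1; subst hw1
      refine Or.inr ⟨minNode_le A n _ j hj1 (by omega) hw, ?_, ?_⟩
      · exact (hloser (2 * j + 1) (Or.inr rfl) hlose).1
      · exact (hloser (2 * j + 1) (Or.inr rfl) hlose).2
  · have hlose : champ A n (2 * j) ≠ champ A n j := fun h => hne (h.trans hw)
    rcases hs with ⟨hu1, hw1⟩ | ⟨hu1, hw1⟩
    · subst hu1; subst hw1
      refine Or.inr ⟨minNode_le A n _ j hj1 (by omega) hw, ?_, ?_⟩
      · exact (hloser (2 * j) (Or.inl rfl) hlose).1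
      · exact (hloser (2 * j) (Or.inl rfl) hlose).2
    · subst hu1; subst hw1
      refine Or.inl ⟨minNode_le A n _ j hj1 (by omega) hw, ?_, ?_⟩
      · exact (hloser (2 * j) (Or.inl rfl) hlose).1
      · exact (hloser (2 * j) (Or.inl rfl) hlose).2

theorem indeg_bound (A : OnlineOrientAlg) (n : ℕ) (j : ℕ) (hj1 : 1 ≤ j) (hj2 : j < 2 * n) :
    Nat.log 2 n - Nat.log 2 j ≤
      ((Finset.range (n - 1)).filter
        (fun i => runHead A (eSeq A n) i = champ A n j ∧ under (n - 1 - i) j)).card := by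
  by_cases hn : n ≤ j
  · have : Nat.log 2 n ≤ Nat.log 2 j := Nat.log_mono_right hn
    omega
  · push_neg at hn
    obtain ⟨c, hc, hcc⟩ : ∃ c, (c = 2 * j ∨ c = 2 * j + 1) ∧ champ A n j = champ A n c := by
      rcases champ_children A n j hj1 hn with h | h
      · exact ⟨2 * j, Or.inl rfl, h⟩
      · exact ⟨2 * j + 1, Or.inr rfl, h⟩
    have ih := indeg_bound A n c (by omega) (by omega)
    have hcj : c / 2 ^ 1 = j := by rw [pow_one]; omega
    have hsub : (Finset.range (n - 1)).filter
          (fun i => runHead A (eSeq A n) i = champ A n c ∧ under (n - 1 - i) c) ⊆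
        (Finset.range (n - 1)).filter
          (fun i => runHead A (eSeq A n) i = champ A n j ∧ under (n - 1 - i) j) := by
      intro x hx
      simp only [Finset.mem_filter] at hx ⊢
      exact ⟨hx.1, by rw [hcc]; exact hx.2.1,
        under_trans hx.2.2 (under_intro 1 hcj)⟩
    have ht0mem : (n - 1 - j) ∈ (Finset.range (n - 1)).filter
        (fun i => runHead A (eSeq A n) i = champ A n j ∧ under (n - 1 - i) j) := by
      simp only [Finset.mem_filter, Finset.mem_range]
      refine ⟨by omega, ?_, ?_⟩
      · rw [runHead_eq A n (n - 1 - j) (by omega), show n - 1 - (n - 1 - j) = j from by omega]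
      · rw [show n - 1 - (n - 1 - j) = j from by omega]; exact under_refl j
    have ht0not : (n - 1 - j) ∉ (Finset.range (n - 1)).filter
        (fun i => runHead A (eSeq A n) i = champ A n c ∧ under (n - 1 - i) c) := by
      simp only [Finset.mem_filter, Finset.mem_range]
      rintro ⟨-, -, hun⟩
      rw [show n - 1 - (n - 1 - j) = j from by omega] at hun
      have := under_le hun
      omega
    have hcard := Finset.card_le_card (Finset.insert_subset ht0mem hsub)
    rw [Finset.card_insert_of_notMem ht0not] at hcard
    have hlogc : Nat.log 2 c = Nat.log 2 j + 1 := by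
      have h1 : 2 ^ (Nat.log 2 j) ≤ j := Nat.pow_log_le_self 2 (by omega)
      have h2 : j < 2 ^ (Nat.log 2 j + 1) := Nat.lt_pow_succ_log_self (by norm_num) j
      refine Nat.log_eq_of_pow_le_of_lt_pow ?_ ?_
      · have : 2 ^ (Nat.log 2 j + 1) = 2 ^ (Nat.log 2 j) * 2 := pow_succ 2 _
        omega
      · have e1 : 2 ^ (Nat.log 2 j + 1 + 1) = 2 ^ (Nat.log 2 j + 1) * 2 := pow_succ 2 _
        omega
    omega
termination_by 2 * n - j
decreasing_by all_goals omega

open SimpleGraph in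
theorem acyclic_of_rank {V : Type*} (G : SimpleGraph V) (r : V → ℕ)
    (h1 : ∀ u w, G.Adj u w → r u ≠ r w)
    (h2 : ∀ u w w', G.Adj u w → G.Adj u w' → r u < r w → r u < r w' → w = w') :
    G.IsAcyclic := by
  classical
  have key : ∀ (u : V) (q : G.Walk u u), q.IsCycle → (∀ x ∈ q.support, r u ≤ r x) → False := by
    intro u q hq hmin
    cases q with
    | nil => exact Walk.IsCycle.not_of_nil hq
    | cons hadj pw =>
      rename_i b
      have hpc := (Walk.cons_isCycle_iff pw hadj).mp hq
      have hlen : 2 ≤ pw.length := by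
        have h3 := hq.three_le_length
        simp only [Walk.length_cons] at h3
        omega
      obtain ⟨c, hadj2, p2, hrev⟩ := Walk.exists_eq_cons_of_ne hadj.ne pw.reverse
      have hrevpath : pw.reverse.IsPath := hpc.1.reverse
      have hbc : b ≠ c := by
        rintro rfl
        rw [hrev] at hrevpath
        have hp2 := ((Walk.cons_isPath_iff _ _).mp hrevpath).1
        have hp2nil := Walk.isPath_iff_eq_nil.mp hp2
        rw [hp2nil] at hrev
        have hl := congrArg Walk.length hrev
        rw [Walk.length_reverse] at hl
        simp at hl
        omega
      have hbmem : b ∈ (Walk.cons hadj pw).support := by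
        simp only [Walk.support_cons, List.mem_cons]
        exact Or.inr pw.start_mem_support
      have hcmem : c ∈ (Walk.cons hadj pw).support := by
        have hc2 : c ∈ pw.reverse.support := by
          rw [hrev]
          simp only [Walk.support_cons, List.mem_cons]
          exact Or.inr p2.start_mem_support
        rw [Walk.support_reverse, List.mem_reverse] at hc2
        simp only [Walk.support_cons, List.mem_cons]
        exact Or.inr hc2
      have hrb : r u < r b := lt_of_le_of_ne (hmin b hbmem) (h1 u b hadj)
      have hrc : r u < r c := lt_of_le_of_ne (hmin c hcmem) (h1 u c hadj2)
      exact hbc (h2 u b c hadj hadj2 hrb hrc)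
  intro v p hp
  obtain ⟨u, hu, hmin⟩ : ∃ u ∈ p.support, ∀ x ∈ p.support, r u ≤ r x := by
    obtain ⟨u, hu1, hu2⟩ := Finset.exists_min_image p.support.toFinset r
      ⟨v, List.mem_toFinset.mpr p.start_mem_support⟩
    exact ⟨u, List.mem_toFinset.mp hu1, fun x hx => hu2 x (List.mem_toFinset.mpr hx)⟩
  refine key u (p.rotate u hu) (hp.rotate hu) ?_
  intro x hx
  rcases (Walk.mem_support_iff _).mp hx with rfl | hx'
  · exact hmin x hu
  · have hperm := p.support_rotate u hu
    have : x ∈ p.support.tail := hperm.mem_iff.mp hx'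
    exact hmin x (List.mem_of_mem_tail this)

theorem not_nested (A : OnlineOrientAlg) (n : ℕ) (j j' : ℕ) (hj1' : 1 ≤ j') (hj2' : j' < n)
    (hjj : j ≠ j') (hund : under j j')
    (hkey : ∀ y, (y = 2 * j' ∨ y = 2 * j' + 1) →
      ∃ x, (x = 2 * j ∨ x = 2 * j + 1) ∧ champ A n y = champ A n x)
    (hj1 : 1 ≤ j) (hjn : j < n) : False := by
  rcases under_of_ne hund hjj with hd | hd
  · obtain ⟨x, hx, hxy⟩ := hkey (2 * j' + 1) (Or.inr rfl)
    have h1 := champ_under A n (2 * j' + 1) (by omega) (by omega)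
    have h2 := champ_under A n x (by omega) (by omega)
    have hu2 : under (champ A n (2 * j' + 1) + n) (2 * j') := by
      rw [hxy]
      refine under_trans (under_trans h2.2 ?_) hd
      rcases hx with rfl | rfl
      · exact under_child_left j
      · exact under_child_right j
    exact under_children_disjoint hj1' hu2 h1.2
  · obtain ⟨x, hx, hxy⟩ := hkey (2 * j') (Or.inl rfl)
    have h1 := champ_under A n (2 * j') (by omega) (by omega)
    have h2 := champ_under A n x (by omega) (by omega)
    have hu2 : under (champ A n (2 * j') + n) (2 * j' + 1) := by
      rw [hxy]
      refine under_trans (under_trans h2.2 ?_) hd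
      rcases hx with rfl | rfl
      · exact under_child_left j
      · exact under_child_right j
    exact under_children_disjoint hj1' h1.2 hu2

end AdvForce

open AdvForce in
/-- For every `k ≥ 1` there is an adversarial strategy using `2^k - 1` acyclic edge
additions that forces any irrevocable online orientation algorithm to create a
vertex of in-degree at least `k`. -/
theorem adversary_forces_indegree (A : OnlineOrientAlg) (k : ℕ) (hk : 1 ≤ k) :
    ∃ e : ℕ → ℕ × ℕ,
      -- the `2^k - 1` arriving edges are pairwise distinct non-loops forming an
      -- acyclic undirected graph
      (∀ i < 2 ^ k - 1, (e i).1 ≠ (e i).2) ∧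
      (∀ i < 2 ^ k - 1, ∀ j < 2 ^ k - 1, i ≠ j →
        s((e i).1, (e i).2) ≠ s((e j).1, (e j).2)) ∧
      (SimpleGraph.fromEdgeSet
        {s : Sym2 ℕ | ∃ i < 2 ^ k - 1, s = s((e i).1, (e i).2)}).IsAcyclic ∧
      -- some vertex attains in-degree at least `k`
      ∃ v : ℕ, k ≤ runIndeg A e (2 ^ k - 1) v := by

  set n := 2 ^ k with hndef
  have hn2 : 2 ≤ n := by
    rw [hndef]
    calc 2 = 2 ^ 1 := (pow_one 2).symm
    _ ≤ 2 ^ k := Nat.pow_le_pow_right (by norm_num) hk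
  refine ⟨eSeq A n, ?_, ?_, ?_, ?_⟩
  · -- non-loops
    intro i hi
    have hj1 : 1 ≤ n - 1 - i := by omega
    have h := eSeq_eq A n (n - 1 - i) hj1 (by omega)
    rw [show n - 1 - (n - 1 - i) = i from by omega] at h
    rw [h]
    exact champ_children_ne A n (n - 1 - i) hj1 (by omega)
  · -- distinct edges
    intro i hi i' hi' hii heq
    have hj1 : 1 ≤ n - 1 - i := by omega
    have hj1' : 1 ≤ n - 1 - i' := by omega
    have h := eSeq_eq A n (n - 1 - i) hj1 (by omega)
    rw [show n - 1 - (n - 1 - i) = i from by omega] at h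
    have h' := eSeq_eq A n (n - 1 - i') hj1' (by omega)
    rw [show n - 1 - (n - 1 - i') = i' from by omega] at h'
    rw [h, h'] at heq
    set j := n - 1 - i with hjdef
    set j' := n - 1 - i' with hjdef'
    dsimp only at heq
    rw [Sym2.eq_iff] at heq
    have hjj : j ≠ j' := by omega
    have hkey : ∀ y, (y = 2 * j' ∨ y = 2 * j' + 1) →
        ∃ x, (x = 2 * j ∨ x = 2 * j + 1) ∧ champ A n y = champ A n x := by
      intro y hy
      rcases heq with ⟨ha, hb⟩ | ⟨ha, hb⟩ <;> rcases hy with rfl | rfl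
      · exact ⟨2 * j, Or.inl rfl, ha.symm⟩
      · exact ⟨2 * j + 1, Or.inr rfl, hb.symm⟩
      · exact ⟨2 * j + 1, Or.inr rfl, hb.symm⟩
      · exact ⟨2 * j, Or.inl rfl, ha.symm⟩
    have hkey' : ∀ y, (y = 2 * j ∨ y = 2 * j + 1) →
        ∃ x, (x = 2 * j' ∨ x = 2 * j' + 1) ∧ champ A n y = champ A n x := by
      intro y hy
      rcases heq with ⟨ha, hb⟩ | ⟨ha, hb⟩ <;> rcases hy with rfl | rfl
      · exact ⟨2 * j', Or.inl rfl, ha⟩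
      · exact ⟨2 * j' + 1, Or.inr rfl, hb⟩
      · exact ⟨2 * j' + 1, Or.inr rfl, ha⟩
      · exact ⟨2 * j', Or.inl rfl, hb⟩
    have hcomp : under j j' ∨ under j' j := by
      obtain ⟨x, hx, hxy⟩ := hkey (2 * j') (Or.inl rfl)
      have h1 := champ_under A n (2 * j') (by omega) (by omega)
      have h2 := champ_under A n x (by omega) (by omega)
      have hu1 : under (champ A n (2 * j') + n) j' :=
        under_trans h1.2 (under_child_left j')
      have hu2 : under (champ A n (2 * j') + n) j := by
        rw [hxy]
        refine under_trans h2.2 ?_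
        rcases hx with rfl | rfl
        · exact under_child_left j
        · exact under_child_right j
      exact under_total hu2 hu1
    rcases hcomp with hc | hc
    · exact not_nested A n j j' hj1' (by omega) hjj hc hkey hj1 (by omega)
    · exact not_nested A n j' j hj1 (by omega) (Ne.symm hjj) hc hkey' hj1' (by omega)
  · -- acyclicity
    apply acyclic_of_rank _ (fun v => 2 * n - minNode A n v)
    · intro u w hadj
      rw [SimpleGraph.fromEdgeSet_adj] at hadj
      obtain ⟨hmem, hne'⟩ := hadj
      obtain ⟨i, hi, hs⟩ := hmem
      have hsp := edge_split A n i u w hi hs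
      have hj1 : 1 ≤ n - 1 - i := by omega
      rcases hsp with ⟨a, b, c⟩ | ⟨a, b, c⟩ <;> omega
    · intro u w w' hadj hadj' hr hr'
      rw [SimpleGraph.fromEdgeSet_adj] at hadj hadj'
      obtain ⟨⟨i, hi, hs⟩, hne1⟩ := hadj
      obtain ⟨⟨i', hi', hs'⟩, hne2⟩ := hadj'
      have hsp := edge_split A n i u w hi hs
      have hsp' := edge_split A n i' u w' hi' hs'
      have hj1 : 1 ≤ n - 1 - i := by omega
      have hj1' : 1 ≤ n - 1 - i' := by omega
      have hb : 2 * (n - 1 - i) ≤ minNode A n u ∧ minNode A n u ≤ 2 * (n - 1 - i) + 1 := by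
        rcases hsp with ⟨a, b, c⟩ | ⟨a, b, c⟩ <;> [omega; exact ⟨b, c⟩]
      have hb' : 2 * (n - 1 - i') ≤ minNode A n u ∧ minNode A n u ≤ 2 * (n - 1 - i') + 1 := by
        rcases hsp' with ⟨a, b, c⟩ | ⟨a, b, c⟩ <;> [omega; exact ⟨b, c⟩]
      have hii : i = i' := by omega
      subst hii
      have hss : s(u, w) = s(u, w') := hs.trans hs'.symm
      rw [Sym2.eq_iff] at hss
      rcases hss with ⟨-, hww⟩ | ⟨hw1, hw2⟩
      · exact hww
      · exact hw2.trans hw1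
  · -- in-degree
    refine ⟨champ A n 1, ?_⟩
    have hb := indeg_bound A n 1 le_rfl (by omega)
    have hlog : Nat.log 2 n = k := by rw [hndef]; exact Nat.log_pow (b := 2) (by norm_num) k
    rw [hlog, Nat.log_one_right, Nat.sub_zero] at hb
    refine le_trans hb ?_
    unfold runIndeg
    apply Finset.card_le_card
    intro x hx
    simp only [Finset.mem_filter] at hx ⊢
    exact ⟨hx.1, hx.2.1⟩
end

section
/- Let T: ℕ → ℝ satisfy T(1) = 0 and T(n) ≤ max over 1 ≤ n₁ < n of [T(n₁) + T(n - n₁) + log₂(min(n₁, n - n₁))] for all n ≥ 2. Then T(n) ≤ n - log₂ n - 1 for all n ≥ 1. -/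
/-- Key arithmetic lemma: for positive reals a b with a+b=n,
log n ≤ 1 + log(max a b), etc. -/
lemma flip_aux (a b : ℕ) (ha : 1 ≤ a) (hb : 1 ≤ b) :
    Real.logb 2 (a + b : ℕ) ≤ 1 + Real.logb 2 (max a b : ℕ) := by
  have hM : (1 : ℝ) ≤ (max a b : ℕ) := by
    exact_mod_cast le_max_of_le_left ha
  have hab : ((a + b : ℕ) : ℝ) ≤ 2 * ((max a b : ℕ) : ℝ) := by
    have : a + b ≤ 2 * max a b := by omega
    exact_mod_cast this
  calc Real.logb 2 (a + b : ℕ) ≤ Real.logb 2 (2 * ((max a b : ℕ) : ℝ)) := by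
        exact Real.logb_le_logb_of_le one_lt_two (by positivity) hab
    _ = 1 + Real.logb 2 (max a b : ℕ) := by
        rw [Real.logb_mul two_ne_zero (by positivity), Real.logb_self_eq_one] <;> norm_num

/-- If `T : ℕ → ℝ` satisfies `T 1 = 0` and, for all `n ≥ 2`,
`T n ≤ max over 1 ≤ n₁ < n of (T n₁ + T (n - n₁) + log₂ (min n₁ (n - n₁)))`,
then `T n ≤ n - log₂ n - 1` for all `n ≥ 1`. -/
theorem flip_recurrence_bound (T : ℕ → ℝ)
    (h1 : T 1 = 0)
    (hrec : ∀ n : ℕ, 2 ≤ n →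
      ∃ n₁ : ℕ, 1 ≤ n₁ ∧ n₁ < n ∧
        T n ≤ T n₁ + T (n - n₁) + Real.logb 2 (min n₁ (n - n₁) : ℕ)) :
    ∀ n : ℕ, 1 ≤ n → T n ≤ n - Real.logb 2 n - 1 := by
  intro n
  induction n using Nat.strong_induction_on with
  | _ n ih =>
    intro hn
    rcases eq_or_lt_of_le hn with h | h
    · subst h
      simp [h1]
    · have h2 : 2 ≤ n := h
      obtain ⟨a, ha1, han, hT⟩ := hrec n h2
      set b := n - a with hb
      have hb1 : 1 ≤ b := by omega
      have hab : a + b = n := by omega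
      have iha := ih a (by omega) ha1
      have ihb := ih b (by omega) hb1
      have hsum : (a : ℝ) + b = n := by exact_mod_cast hab
      have hmm : Real.logb 2 (min a b : ℕ) + Real.logb 2 (max a b : ℕ)
          = Real.logb 2 a + Real.logb 2 b := by
        rcases le_total a b with hle | hle <;>
          simp [min_eq_left, min_eq_right, max_eq_left, max_eq_right, hle] <;> ring
      have key := flip_aux a b ha1 hb1
      rw [hab] at key
      linarith
end

section
/- Fix integers δ ≥ 1 and Δ ≥ 2δ. Consider the all-flip algorithm processing n edge additions on a graph that admits a δ-orientation at all times: each new edge is oriented arbitrarily, and whenever a vertex reaches in-degree Δ + 1, all its incoming edges are flipped, repeating until every vertex has in-degree at most Δ. Then the total number of edge reorientations over the n additions is at most n·(Δ + 1)/(Δ + 1 - 2δ). -/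
/-- The head (vertex the edge points to) of edge `i` under orientation `o`:
`o i = true` means edge `i` points toward its second endpoint. -/
def edgeHead {V : Type*} (E : ℕ → V × V) (o : ℕ → Bool) (i : ℕ) : V :=
  if o i then (E i).2 else (E i).1

/-- In-degree of `v` among the first `m` edges under orientation `o`. -/
def headIndeg {V : Type*} [DecidableEq V] (E : ℕ → V × V) (o : ℕ → Bool)
    (m : ℕ) (v : V) : ℕ :=
  ((Finset.range m).filter (fun i => edgeHead E o i = v)).card

lemma card_filter_split (s : Finset ℕ) (P Q : ℕ → Prop) [DecidablePred P] [DecidablePred Q] :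
    (s.filter P).card
      = (s.filter (fun i => Q i ∧ P i)).card + (s.filter (fun i => ¬ Q i ∧ P i)).card := by
  rw [← Finset.card_filter_add_card_filter_not (p := Q) (s := s.filter P),
    Finset.filter_filter, Finset.filter_filter]
  congr 1 <;> · apply congrArg; apply Finset.filter_congr; intro x _; constructor <;> tauto

lemma flip_bad_step {V : Type*} [DecidableEq V] (δ Δ n m : ℕ) (E : ℕ → V × V)
    (σ o o' : ℕ → Bool) (v : V)
    (hmn : m ≤ n)
    (hσ : headIndeg E σ n v ≤ δ)
    (hind : headIndeg E o m v = Δ + 1)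
    (ho' : ∀ i < m, o' i = if edgeHead E o i = v then !(o i) else o i) :
    ((Finset.range m).filter (fun i => o' i ≠ σ i)).card + (Δ + 1)
      ≤ ((Finset.range m).filter (fun i => o i ≠ σ i)).card + 2 * δ := by
  classical
  set Gv := (Finset.range m).filter (fun i => edgeHead E o i = v ∧ o i = σ i) with hGv
  set Bv := (Finset.range m).filter (fun i => edgeHead E o i = v ∧ o i ≠ σ i) with hBv
  set Bn := (Finset.range m).filter (fun i => ¬ edgeHead E o i = v ∧ o i ≠ σ i) with hBn
  have hsplit : ((Finset.range m).filter (fun i => o i ≠ σ i)).card = Bv.card + Bn.card :=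
    card_filter_split _ _ (fun i => edgeHead E o i = v)
  have hsplit' : ((Finset.range m).filter (fun i => o' i ≠ σ i)).card = Gv.card + Bn.card := by
    have e1 : (Finset.range m).filter (fun i => o' i ≠ σ i) = Gv ∪ Bn := by
      ext i
      simp only [Finset.mem_filter, Finset.mem_union, Finset.mem_range, hGv, hBv, hBn]
      constructor
      · rintro ⟨hi, hne⟩
        rw [ho' i hi] at hne
        by_cases hv : edgeHead E o i = v
        · simp only [hv, if_true] at hne
          left
          refine ⟨hi, hv, ?_⟩
          revert hne; cases o i <;> cases σ i <;> simp
        · simp only [hv, if_false] at hne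
          right; exact ⟨hi, hv, hne⟩
      · rintro (⟨hi, hv, heq⟩ | ⟨hi, hv, hne⟩) <;> refine ⟨‹i < m›, ?_⟩ <;> rw [ho' i ‹i < m›]
        · simp only [hv, if_true]
          revert heq; cases o i <;> cases σ i <;> simp
        · simp only [hv, if_false]; exact hne
    rw [e1, Finset.card_union_of_disjoint]
    rw [Finset.disjoint_left]
    intro a ha hb
    rw [hGv] at ha; rw [hBn] at hb
    simp only [Finset.mem_filter] at ha hb
    tauto
  have hGB : Gv.card + Bv.card = Δ + 1 := by
    rw [← hind]
    unfold headIndeg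
    rw [card_filter_split (Finset.range m) (fun i => edgeHead E o i = v) (fun i => o i = σ i)]
    congr 1 <;> · apply congrArg; apply Finset.filter_congr; intro x _; constructor <;> tauto
  have hGδ : Gv.card ≤ δ := by
    refine le_trans (Finset.card_le_card ?_) hσ
    show Gv ⊆ (Finset.range n).filter (fun i => edgeHead E σ i = v)
    intro i hi
    rw [hGv] at hi
    simp only [Finset.mem_filter, Finset.mem_range] at hi ⊢
    obtain ⟨hi, hv, heq⟩ := hi
    refine ⟨lt_of_lt_of_le hi hmn, ?_⟩
    rw [show edgeHead E σ i = edgeHead E o i from by unfold edgeHead; rw [heq]]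
    exact hv
  omega

/-- The all-flip algorithm: edges arrive one-by-one and are oriented arbitrarily;
whenever a vertex reaches in-degree `Δ + 1`, all of its incoming edges are
flipped, and this is repeated until every vertex has in-degree at most `Δ`.
If the final edge set admits a `δ`-orientation with `δ ≥ 1` and `Δ ≥ 2δ`, then
the total number of edge reorientations over `n` additions is at most
`n * (Δ + 1) / (Δ + 1 - 2δ)`.

The run is encoded by time steps `t = 0, …, T`: `numAdd t` is the number of edges
added so far and `orient t` the current orientation; each step is either an edge
addition (performed only when all in-degrees are at most `Δ`) or an all-flip at a
vertex of in-degree `Δ + 1`. -/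
theorem all_flip_total_reorientations
    {V : Type*} [DecidableEq V] (δ Δ n T : ℕ)
    (hδ : 1 ≤ δ) (hΔ : 2 * δ ≤ Δ)
    (E : ℕ → V × V) (hloop : ∀ i < n, (E i).1 ≠ (E i).2)
    (orient : ℕ → ℕ → Bool) (numAdd : ℕ → ℕ)
    (h0 : numAdd 0 = 0) (hT : numAdd T = n)
    (hstep : ∀ t < T,
      -- edge-addition step: one new edge, arbitrary orientation, no other change,
      -- performed only when every vertex satisfies the in-degree bound
      (numAdd (t + 1) = numAdd t + 1 ∧
        (∀ i < numAdd t, orient (t + 1) i = orient t i) ∧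
        (∀ v, headIndeg E (orient t) (numAdd t) v ≤ Δ)) ∨
      -- all-flip step at a vertex `v` of in-degree `Δ + 1`
      (numAdd (t + 1) = numAdd t ∧
        ∃ v, headIndeg E (orient t) (numAdd t) v = Δ + 1 ∧
          ∀ i < numAdd t, orient (t + 1) i =
            (if edgeHead E (orient t) i = v then !(orient t i) else orient t i)))
    -- the final edge set admits a `δ`-orientation
    (href : ∃ σ : ℕ → Bool, ∀ v, headIndeg E σ n v ≤ δ) :
    -- the total number of reorientations is at most `n (Δ+1) / (Δ+1-2δ)`
    ((((Finset.range T) ×ˢ (Finset.range n)).filter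
        (fun p => p.2 < numAdd p.1 ∧ orient (p.1 + 1) p.2 ≠ orient p.1 p.2)).card : ℝ)
      ≤ n * (Δ + 1) / (Δ + 1 - 2 * δ) := by
  classical
  obtain ⟨σ, hσ⟩ := href
  set bad : ℕ → ℕ :=
    fun t => ((Finset.range (numAdd t)).filter (fun i => orient t i ≠ σ i)).card with hbadDef
  set Fl : ℕ → ℕ :=
    fun t => ((Finset.range t).filter (fun s => numAdd (s+1) = numAdd s)).card with hFlDef
  -- monotonicity of numAdd along the run
  have hmono : ∀ t ≤ T, numAdd t ≤ n := by
    intro t ht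
    have key : ∀ s, t ≤ s → s ≤ T → numAdd t ≤ numAdd s := by
      intro s hts
      induction s, hts using Nat.le_induction with
      | base => intro _; exact le_refl _
      | succ s hts ih =>
        intro hsT
        have hs : s < T := by omega
        have h1 := ih (by omega)
        rcases hstep s hs with ⟨h2, _⟩ | ⟨h2, _⟩ <;> omega
    have := key T ht (le_refl T)
    omega
  -- counting flips step by step
  have hFl : ∀ t, Fl (t+1) = Fl t + (if numAdd (t+1) = numAdd t then 1 else 0) := by
    intro t
    simp only [hFlDef, Finset.range_add_one, Finset.filter_insert]
    split
    · rw [Finset.card_insert_of_notMem (by simp)]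
    · simp
  -- potential invariant
  have key : ∀ t ≤ T, bad t + (Δ+1) * Fl t ≤ numAdd t + 2*δ * Fl t := by
    intro t
    induction t with
    | zero => intro _; simp [hbadDef, hFlDef, h0]
    | succ t ih =>
      intro ht
      have htT : t < T := by omega
      have iht := ih (by omega)
      rcases hstep t htT with ⟨h1, h2, h3⟩ | ⟨h1, v, hv, h2⟩
      · -- addition step
        have hF : Fl (t+1) = Fl t := by rw [hFl t]; split <;> omega
        have hb : bad (t+1) ≤ bad t + 1 := by
          have he : (Finset.range (numAdd t)).filter (fun i => orient (t+1) i ≠ σ i)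
              = (Finset.range (numAdd t)).filter (fun i => orient t i ≠ σ i) := by
            apply Finset.filter_congr
            intro i hi
            rw [Finset.mem_range] at hi
            rw [h2 i hi]
          simp only [hbadDef, h1, Finset.range_add_one, Finset.filter_insert]
          split
          · rw [he]
            exact le_trans (Finset.card_insert_le _ _) (by omega)
          · rw [he]; exact Nat.le_succ _
        calc bad (t+1) + (Δ+1) * Fl (t+1)
            ≤ (bad t + 1) + (Δ+1) * Fl t := by rw [hF]; omega
          _ ≤ (numAdd t + 2*δ*Fl t) + 1 := by omega
          _ = numAdd (t+1) + 2*δ * Fl (t+1) := by rw [hF, h1]; ring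
      · -- flip step
        have hF : Fl (t+1) = Fl t + 1 := by rw [hFl t]; simp [h1]
        have hb : bad (t+1) + (Δ+1) ≤ bad t + 2*δ := by
          have := flip_bad_step δ Δ n (numAdd t) E σ (orient t) (orient (t+1)) v
            (hmono t (le_of_lt htT)) (hσ v) hv h2
          simpa [hbadDef, h1] using this
        calc bad (t+1) + (Δ+1) * Fl (t+1)
            = (bad (t+1) + (Δ+1)) + (Δ+1) * Fl t := by rw [hF]; ring
          _ ≤ (bad t + 2*δ) + (Δ+1) * Fl t := by omega
          _ ≤ (numAdd t + 2*δ*Fl t) + 2*δ := by omega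
          _ = numAdd (t+1) + 2*δ * Fl (t+1) := by rw [hF, h1]; ring
  -- counting reorientations
  have hcard : (((Finset.range T) ×ˢ (Finset.range n)).filter
        (fun p => p.2 < numAdd p.1 ∧ orient (p.1 + 1) p.2 ≠ orient p.1 p.2)).card
      = Fl T * (Δ + 1) := by
    rw [Finset.card_filter, Finset.sum_product]
    have hsum : ∀ t ∈ Finset.range T,
        (∑ i ∈ Finset.range n,
          if i < numAdd t ∧ orient (t + 1) i ≠ orient t i then 1 else 0)
        = (if numAdd (t+1) = numAdd t then Δ + 1 else 0) := by
      intro t htmem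
      rw [Finset.mem_range] at htmem
      rcases hstep t htmem with ⟨h1, h2, h3⟩ | ⟨h1, v, hv, h2⟩
      · rw [if_neg (by omega)]
        apply Finset.sum_eq_zero
        intro i _
        rw [if_neg]
        rintro ⟨hi, hne⟩
        exact hne (h2 i hi)
      · rw [if_pos h1, ← hv]
        unfold headIndeg
        rw [Finset.card_filter]
        rw [← Finset.sum_range_add_sum_Ico _ (hmono t (le_of_lt htmem))]
        have hz : (∑ i ∈ Finset.Ico (numAdd t) n,
            if i < numAdd t ∧ orient (t + 1) i ≠ orient t i then 1 else 0) = 0 := by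
          apply Finset.sum_eq_zero
          intro i hi
          rw [Finset.mem_Ico] at hi
          rw [if_neg]
          rintro ⟨hlt, _⟩
          omega
        rw [hz, add_zero]
        apply Finset.sum_congr rfl
        intro i hi
        rw [Finset.mem_range] at hi
        congr 1
        have := h2 i hi
        by_cases hvv : edgeHead E (orient t) i = v
        · simp only [hvv, if_true] at this
          simp only [hi, true_and, this, hvv, iff_true]
          simp
        · simp only [hvv, if_false] at this
          simp [hi, this, hvv]
    rw [Finset.sum_congr rfl hsum]
    rw [← Finset.sum_filter, Finset.sum_const, smul_eq_mul]
  -- conclude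
  have hkeyT : (Δ+1) * Fl T ≤ n + 2*δ * Fl T := by
    have h := key T (le_refl T)
    rw [hT] at h
    omega
  rw [hcard]
  have hd : (0:ℝ) < (Δ:ℝ) + 1 - 2*δ := by
    have : (2*δ:ℝ) ≤ Δ := by exact_mod_cast hΔ
    linarith
  rw [le_div_iff₀ hd]
  have hkR : ((Δ:ℝ)+1) * (Fl T) ≤ n + 2*δ*(Fl T) := by exact_mod_cast hkeyT
  have hF0 : (0:ℝ) ≤ ((Δ:ℝ)+1) := by positivity
  have hstep2 : (Fl T : ℝ) * ((Δ:ℝ)+1-2*δ) ≤ n := by nlinarith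
  push_cast
  nlinarith [mul_le_mul_of_nonneg_left hstep2 hF0]
end

section
/- Let G^res be a residual directed graph, a ∈ L an arriving vertex, and P a shortest directed path in G^res from a to an unsaturated vertex b. Let H^res be the graph obtained from G^res by reversing all edges of P. If u and v are vertices on P with u appearing before v along P, then the distance from u to v in H^res is at least the distance from u to v in G^res. -/
/-- `q` is a directed walk of length `k` from `a` to `b` in the digraph `D`. -/
def IsWalk {V : Type*} (D : V → V → Prop) (k : ℕ) (q : ℕ → V) (a b : V) : Prop :=
  q 0 = a ∧ q k = b ∧ ∀ i < k, D (q i) (q (i + 1))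

/-- Let `P` (given by `p : ℕ → V`, of length `L`, with distinct vertices) be a
shortest directed path in the residual graph `D` from `a` to an unsaturated
vertex, ending at the unsaturated vertex `b`.  Let `H` be the graph obtained from
`D` by reversing the edges of `P`.  If `u = p s` and `v = p t` with `s ≤ t ≤ L`
(`u` appears before `v` on `P`), then the distance from `u` to `v` in `H` is at
least the distance from `u` to `v` in `D`: every `u → v` walk in `H` is at least
as long as some `u → v` walk in `D`. -/
theorem reversed_path_distance_ge
    {V : Type*} [Fintype V] (D : V → V → Prop) (unsat : Set V)
    (a b : V) (L : ℕ) (p : ℕ → V)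
    (hP : IsWalk D L p a b)
    (hb : b ∈ unsat)
    (hinj : ∀ i j, i ≤ L → j ≤ L → p i = p j → i = j)
    (hshort : ∀ (k : ℕ) (q : ℕ → V) (y : V), y ∈ unsat → IsWalk D k q a y → L ≤ k)
    (H : V → V → Prop)
    (hH : ∀ x y, H x y ↔
      ((D x y ∧ ¬ ∃ i < L, p i = x ∧ p (i + 1) = y) ∨ (∃ i < L, p i = y ∧ p (i + 1) = x)))
    (s t : ℕ) (hst : s ≤ t) (htL : t ≤ L) :
    ∀ (k : ℕ) (q : ℕ → V), IsWalk H k q (p s) (p t) →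
      ∃ (k' : ℕ) (q' : ℕ → V), k' ≤ k ∧ IsWalk D k' q' (p s) (p t) := by
  classical
  obtain ⟨hp0, hpL, hpE⟩ := hP
  -- `R x` : set of lengths of D-walks from `x` to an unsaturated vertex
  set R : V → Set ℕ := fun x => {m | ∃ q y, y ∈ unsat ∧ IsWalk D m q x y} with hR
  set ψ : V → ℕ := fun x => sInf (R x) with hψ
  -- the tail of P witnesses `L - i ∈ R (p i)`
  have hmem : ∀ i ≤ L, (L - i) ∈ R (p i) := by
    intro i hi
    refine ⟨fun j => p (i + j), b, hb, by show p (i + 0) = p i; rw [Nat.add_zero], ?_, ?_⟩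
    · show p (i + (L - i)) = b
      rw [Nat.add_sub_cancel' hi]; exact hpL
    · intro j hj
      have h1 : i + j < L := by omega
      have h2 := hpE (i + j) h1
      show D (p (i + j)) (p (i + (j + 1)))
      have h3 : i + (j + 1) = (i + j) + 1 := by omega
      rw [h3]; exact h2
  -- by shortestness, every element of `R (p i)` is at least `L - i`
  have hlow : ∀ i ≤ L, ∀ m ∈ R (p i), L - i ≤ m := by
    intro i hi m hm
    obtain ⟨q, y, hy, hq0, hqm, hqE⟩ := hm
    have hw : IsWalk D (i + m) (fun j => if j ≤ i then p j else q (j - i)) a y := by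
      refine ⟨by simp [hp0], ?_, ?_⟩
      · by_cases h : m = 0
        · subst h
          simp only [Nat.add_zero, le_refl, if_pos]
          rw [← hqm, ← hq0]
        · have : ¬ (i + m ≤ i) := by omega
          simp only [this, if_neg, Nat.add_sub_cancel_left]
          exact hqm
      · intro j hj
        by_cases h1 : j + 1 ≤ i
        · have h2 : j ≤ i := by omega
          simp only [h1, h2, if_pos]
          exact hpE j (by omega)
        · by_cases h2 : j ≤ i
          · have hji : j = i := by omega
            subst hji
            have hm0 : 0 < m := by omega
            have := hqE 0 hm0
            simp only [h1, h2, if_pos, if_neg]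
            have : D (p j) (q 1) := by rw [hq0] at this; simpa using this
            simpa [Nat.add_sub_cancel_left] using this
          · have h3 : ¬ (j + 1 ≤ i) := h1
            simp only [h2, h3, if_neg]
            have h4 : j - i < m := by omega
            have := hqE (j - i) h4
            have he : j + 1 - i = j - i + 1 := by omega
            rw [he]
            exact this
    have := hshort (i + m) _ y hy hw
    omega
  have hne : ∀ i ≤ L, (R (p i)).Nonempty := fun i hi => ⟨_, hmem i hi⟩
  have hval : ∀ i ≤ L, ψ (p i) = L - i := by
    intro i hi
    exact Nat.le_antisymm (Nat.sInf_le (hmem i hi))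
      (hlow i hi _ (Nat.sInf_mem (hne i hi)))
  -- across a D-edge, ψ increases by at most one going backwards
  have hstep : ∀ x y, D x y → (R y).Nonempty → (R x).Nonempty ∧ ψ x ≤ ψ y + 1 := by
    intro x y hxy hney
    have hmemy : ψ y ∈ R y := Nat.sInf_mem hney
    obtain ⟨q, z, hz, hq0, hqm, hqE⟩ := hmemy
    have hw : IsWalk D (ψ y + 1) (fun j => if j = 0 then x else q (j - 1)) x z := by
      refine ⟨by simp, ?_, ?_⟩
      · show (if ψ y + 1 = 0 then x else q (ψ y + 1 - 1)) = z
        rw [if_neg (by omega), Nat.add_sub_cancel]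
        exact hqm
      intro j hj
      rcases Nat.eq_zero_or_pos j with h | h
      · subst h
        simpa [hq0] using hxy
      · have h1 : j ≠ 0 := by omega
        have h2 : j + 1 ≠ 0 := by omega
        simp only [h1, h2, if_neg]
        have h3 : j - 1 < ψ y := by omega
        have := hqE (j - 1) h3
        have he : j + 1 - 1 = j - 1 + 1 := by omega
        rw [he]
        exact this
    have hmem' : (ψ y + 1) ∈ R x := ⟨_, z, hz, hw⟩
    exact ⟨⟨_, hmem'⟩, Nat.sInf_le hmem'⟩
  intro k q hq
  obtain ⟨hq0, hqk, hqE⟩ := hq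
  -- backward induction along the walk `q`
  have key : ∀ j ≤ k, (R (q (k - j))).Nonempty ∧ ψ (q (k - j)) ≤ (L - t) + j := by
    intro j
    induction j with
    | zero =>
        intro _
        simp only [Nat.sub_zero, hqk, Nat.add_zero]
        exact ⟨hne t htL, le_of_eq (hval t htL)⟩
    | succ j ih =>
        intro hjk
        have hj : j ≤ k := by omega
        obtain ⟨ihne, ihle⟩ := ih hj
        have hm : k - (j + 1) < k := by omega
        have hedge := hqE (k - (j + 1)) hm
        have he : k - (j + 1) + 1 = k - j := by omega
        rw [he] at hedge
        rcases (hH _ _).mp hedge with ⟨hD, _⟩ | ⟨i, hiL, hpi, hpi1⟩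
        · obtain ⟨hnex, hlex⟩ := hstep _ _ hD ihne
          exact ⟨hnex, by omega⟩
        · rw [← hpi1]
          have h1 : ψ (p (i + 1)) = L - (i + 1) := hval (i + 1) (by omega)
          have h2 : ψ (q (k - j)) = L - i := by rw [← hpi]; exact hval i (by omega)
          refine ⟨hne (i + 1) (by omega), ?_⟩
          rw [h1]
          omega
  have hfin := key k le_rfl
  rw [Nat.sub_self, hq0, hval s (le_trans hst htL)] at hfin
  have hts : t - s ≤ k := by omega
  refine ⟨t - s, fun i => p (s + i), hts, by show p (s + 0) = p s; rw [Nat.add_zero], ?_, ?_⟩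
  · show p (s + (t - s)) = p t
    rw [Nat.add_sub_cancel' hst]
  · intro i hi
    have h1 : s + i < L := by omega
    have h2 := hpE (s + i) h1
    show D (p (s + i)) (p (s + (i + 1)))
    have h3 : s + (i + 1) = (s + i) + 1 := by omega
    rw [h3]; exact h2
end

section
/- In the shortest augmenting path algorithm for online bipartite matching, the height of every vertex is non-decreasing over arrivals: if x is any vertex, G^res the residual graph before an augmentation along a shortest path P to an unsaturated vertex, and H^res the residual graph after reversing P, then the distance in H^res from x to the set of unsaturated vertices is at least the distance in G^res from x to the set of unsaturated vertices. -/
lemma IsWalk.tail' {V : Type*} {D : V → V → Prop} {k : ℕ} {q : ℕ → V} {x y : V}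
    (h : IsWalk D (k + 1) q x y) : IsWalk D k (fun j => q (j + 1)) (q 1) y := by
  obtain ⟨h0, hk, he⟩ := h
  exact ⟨rfl, hk, fun i hi => he (i + 1) (by omega)⟩

lemma IsWalk.cons' {V : Type*} {D : V → V → Prop} {k : ℕ} {q : ℕ → V} {x y z : V}
    (hD : D x y) (h : IsWalk D k q y z) :
    IsWalk D (k + 1) (fun j => if j = 0 then x else q (j - 1)) x z := by
  obtain ⟨h0, hk, he⟩ := h
  refine ⟨by simp, by simp [hk], fun i hi => ?_⟩
  rcases Nat.eq_zero_or_pos i with h | h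
  · subst h; simpa [h0] using hD
  · have h2 := he (i - 1) (by omega)
    simp only [if_neg (by omega : ¬ i = 0), if_neg (by omega : ¬ i + 1 = 0)]
    have e1 : i - 1 + 1 = i := by omega
    have e2 : i + 1 - 1 = i := by omega
    rw [e1] at h2
    rw [e2]
    exact h2

lemma IsWalk.prefix' {V : Type*} {D : V → V → Prop} {L : ℕ} {p : ℕ → V} {a b : V}
    (h : IsWalk D L p a b) (i : ℕ) (hi : i ≤ L) : IsWalk D i p a (p i) :=
  ⟨h.1, rfl, fun j hj => h.2.2 j (by omega)⟩

lemma IsWalk.suffix' {V : Type*} {D : V → V → Prop} {L : ℕ} {p : ℕ → V} {a b : V}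
    (h : IsWalk D L p a b) (i : ℕ) (hi : i ≤ L) :
    IsWalk D (L - i) (fun j => p (i + j)) (p i) b := by
  obtain ⟨h0, hL, he⟩ := h
  refine ⟨by simp, ?_, fun j hj => ?_⟩
  · simp only
    rw [show i + (L - i) = L by omega, hL]
  · have := he (i + j) (by omega)
    simpa [Nat.add_assoc] using this

lemma IsWalk.concat' {V : Type*} {D : V → V → Prop} {m n : ℕ} {q1 q2 : ℕ → V} {x y z : V}
    (h1 : IsWalk D m q1 x y) (h2 : IsWalk D n q2 y z) :
    IsWalk D (m + n) (fun j => if j ≤ m then q1 j else q2 (j - m)) x z := by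
  obtain ⟨a0, am, ae⟩ := h1
  obtain ⟨b0, bn, be⟩ := h2
  refine ⟨by simp [a0], ?_, fun i hi => ?_⟩
  · simp only
    rcases Nat.eq_zero_or_pos n with h | h
    · subst h; simp [am, ← bn, ← b0]
    · rw [if_neg (by omega), show m + n - m = n by omega, bn]
  · beta_reduce
    rcases lt_trichotomy i m with h | h | h
    · rw [if_pos (by omega), if_pos (by omega)]
      exact ae i h
    · subst h
      have hn : 0 < n := by omega
      rw [if_pos le_rfl, if_neg (by omega), show i + 1 - i = 1 by omega, am, ← b0]
      exact be 0 hn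
    · rw [if_neg (by omega), if_neg (by omega), show i + 1 - m = i - m + 1 by omega]
      exact be (i - m) (by omega)

/-- Heights are non-decreasing under augmentation.  Let `P` (given by `p`, of
length `L`, with distinct vertices) be a shortest directed path in the residual
graph `D` from the arriving vertex `a` to an unsaturated vertex `b`, and let `H`
be the graph obtained by reversing the edges of `P`.  The augmentation can only
remove `b` from the set of unsaturated vertices (`unsat' ⊆ unsat` and
`unsat \ unsat' ⊆ {b}`).  Then for every vertex `x`, the distance in `H` from `x`
to the new unsaturated set is at least the distance in `D` from `x` to the old
unsaturated set: every `H`-walk from `x` to a vertex of `unsat'` is at least as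
long as some `D`-walk from `x` to a vertex of `unsat`. -/
theorem height_nondecreasing
    {V : Type*} [Fintype V] (D : V → V → Prop) (unsat unsat' : Set V)
    (a b : V) (L : ℕ) (p : ℕ → V)
    (hP : IsWalk D L p a b)
    (hb : b ∈ unsat)
    (hinj : ∀ i j, i ≤ L → j ≤ L → p i = p j → i = j)
    (hshort : ∀ (k : ℕ) (q : ℕ → V) (y : V), y ∈ unsat → IsWalk D k q a y → L ≤ k)
    (H : V → V → Prop)
    (hH : ∀ x y, H x y ↔
      ((D x y ∧ ¬ ∃ i < L, p i = x ∧ p (i + 1) = y) ∨ (∃ i < L, p i = y ∧ p (i + 1) = x)))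
    (hsub : unsat' ⊆ unsat) (hdiff : unsat \ unsat' ⊆ {b}) :
    ∀ (x : V) (k : ℕ) (q : ℕ → V) (y : V), y ∈ unsat' → IsWalk H k q x y →
      ∃ (k' : ℕ) (q' : ℕ → V) (y' : V), y' ∈ unsat ∧ k' ≤ k ∧ IsWalk D k' q' x y' := by
  intro x k q y hy hw
  have hyu : y ∈ unsat := hsub hy
  clear hy
  induction k generalizing x q with
  | zero =>
    exact ⟨0, q, y, hyu, le_rfl, hw.1, hw.2.1, fun i hi => absurd hi (by omega)⟩
  | succ k ih =>
    obtain ⟨k', q', y', hy', hk', hw'⟩ := ih (q 1) (fun j => q (j + 1)) hw.tail'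
    have hedge : H x (q 1) := by
      have := hw.2.2 0 (by omega)
      rwa [hw.1] at this
    rcases (hH x (q 1)).mp hedge with ⟨hD, -⟩ | ⟨i, hiL, hpi, hpi1⟩
    · exact ⟨k' + 1, _, y', hy', by omega, IsWalk.cons' hD hw'⟩
    · -- reversed edge: x = p (i+1), q 1 = p i
      have hwpi : IsWalk D k' q' (p i) y' := by rwa [hpi]
      have hlong : L ≤ i + k' := by
        have := (hP.prefix' i (by omega)).concat' hwpi
        exact hshort _ _ _ hy' this
      have hsuf := hP.suffix' (i + 1) (by omega)
      rw [hpi1] at hsuf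
      exact ⟨L - (i + 1), _, b, hb, by omega, hsuf⟩
end

section
/- Suppose a process over n arrivals maintains heights height(x) ∈ {1, 3, 5, …} for vertices x ∈ L with |L| = n, such that the number of vertices with height ≥ 2h+1 is at most n/2^h for all h ≥ 0, and each swap operation increases the potential Φ = Σ_{x ∈ L} (height(x) - 1)/2 by at least 1, with heights never decreasing and new vertices entering at height contributing nonneg potential. Then the total number of swaps over n arrivals is at most Σ_{h≥0} h·(n/2^h) = 2n. -/
open Finset in
/-- Abstract potential argument for the shortest augmenting path algorithm
(Theorem 4.1): over `n` arrivals, heights of the `n` left vertices are odd,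
start at 1, never decrease, at any time at most `n / 2^h` vertices have height
at least `2h + 1`, and each swap increases the potential
`Φ = Σ (height x - 1) / 2` by at least 1.  Then the total number of swaps over
the `n` arrivals is at most `2n`. -/
theorem total_swaps_le_two_n
    (n : ℕ) (height : ℕ → Fin n → ℕ) (swaps : ℕ → ℕ)
    (hinit : ∀ x, height 0 x = 1)
    (hodd : ∀ t x, Odd (height t x))
    (hmono : ∀ t x, height t x ≤ height (t + 1) x)
    (htail : ∀ t h : ℕ,
      ((univ.filter (fun x => 2 * h + 1 ≤ height t x)).card : ℝ) ≤ n / 2 ^ h)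
    (hswap : ∀ t, (∑ x, (height t x - 1) / 2) + swaps t ≤
      ∑ x, (height (t + 1) x - 1) / 2) :
    ∑ t ∈ range n, swaps t ≤ 2 * n := by
  -- potential
  set Φ : ℕ → ℕ := fun t => ∑ x, (height t x - 1) / 2 with hΦ
  -- telescoping: Φ 0 + sum of swaps ≤ Φ T
  have htel : ∀ T, Φ 0 + ∑ t ∈ range T, swaps t ≤ Φ T := by
    intro T
    induction T with
    | zero => simp
    | succ T ih =>
      rw [Finset.sum_range_succ, ← add_assoc]
      calc Φ 0 + ∑ t ∈ range T, swaps t + swaps T ≤ Φ T + swaps T := by omega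
        _ ≤ Φ (T + 1) := hswap T
  have hΦ0 : Φ 0 = 0 := by
    simp [hΦ, hinit]
  -- k x := (height n x - 1) / 2
  set k : Fin n → ℕ := fun x => (height n x - 1) / 2 with hk
  have hkiff : ∀ (h : ℕ) (x : Fin n), h ≤ k x ↔ 2 * h + 1 ≤ height n x := by
    intro h x
    obtain ⟨m, hm⟩ := hodd n x
    simp only [hk, hm]
    omega
  -- bound Φ n ≤ n
  have hΦn : Φ n ≤ n := by
    -- choose H a uniform bound on k
    set H : ℕ := (univ : Finset (Fin n)).sup k with hH
    have hkH : ∀ x : Fin n, k x ≤ H := fun x => Finset.le_sup (mem_univ x)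
    have key : (Φ n : ℝ) = ∑ h ∈ range H, ((univ.filter
        (fun x => 2 * (h + 1) + 1 ≤ height n x)).card : ℝ) := by
      have : (Φ n : ℝ) = ∑ x, ∑ h ∈ range H, (if h < k x then (1 : ℝ) else 0) := by
        push_cast [hΦ]
        refine Finset.sum_congr rfl fun x _ => ?_
        have : Finset.filter (fun h => h < k x) (range H) = range (k x) := by
          ext h
          simp only [mem_filter, mem_range]
          exact ⟨fun ⟨_, h2⟩ => h2, fun h2 => ⟨lt_of_lt_of_le h2 (hkH x), h2⟩⟩
        rw [Finset.sum_ite, Finset.sum_const_zero, add_zero, this]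
        simp [hk]
      rw [this, Finset.sum_comm]
      refine Finset.sum_congr rfl fun h _ => ?_
      rw [Finset.sum_boole]
      congr 2
      ext x
      simp only [mem_filter, mem_univ, true_and]
      rw [← hkiff]
      omega
    have hbound : (Φ n : ℝ) ≤ ∑ h ∈ range H, (n : ℝ) / 2 ^ (h + 1) := by
      rw [key]
      exact Finset.sum_le_sum fun h _ => htail n (h + 1)
    have hgeo : ∑ h ∈ range H, (n : ℝ) / 2 ^ (h + 1) ≤ n := by
      have h2 : ∀ h : ℕ, (n : ℝ) / 2 ^ (h + 1) = (n / 2 : ℝ) * (1 / 2) ^ h := by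
        intro h
        rw [div_pow, one_pow, div_mul_div_comm, mul_one, pow_succ,
          mul_comm ((2:ℝ)^h) 2]
      simp only [h2, ← Finset.mul_sum]
      calc (n / 2 : ℝ) * ∑ h ∈ range H, (1 / 2 : ℝ) ^ h
          ≤ (n / 2 : ℝ) * 2 := by
            apply mul_le_mul_of_nonneg_left (sum_geometric_two_le H)
            positivity
        _ = n := by ring
    have : (Φ n : ℝ) ≤ n := hbound.trans hgeo
    exact_mod_cast this
  have := htel n
  omega
end
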